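/- arXiv:2008.09270 — 2 statements merged into one kernel-verified Lean document; each statement's English description precedes it below -/
import Mathlib

section
/- A vector space X over a field K is finite-dimensional if and only if every linear operator A : X → X that admits a right inverse (a linear map C : X → X with A ∘ C = id) is injective. -/
theorem stmt_11 {K X : Type*} [Field K] [AddCommGroup X] [Module K X] :
    FiniteDimensional K X ↔
      ∀ A : X →ₗ[K] X, (∃ C : X →ₗ[K] X, A ∘ₗ C = LinearMap.id) →
        Function.Injective A := by
  constructor
  · intro hfd A ⟨C, hC⟩
    have hsurj : Function.Surjective A := fun x =>
      ⟨C x, by simpa using congrArg (fun f => f x) hC⟩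
    exact (LinearMap.injective_iff_surjective).mpr hsurj
  · intro h
    by_contra hfd
    classical
    set ι := Module.Basis.ofVectorSpaceIndex K X
    set b : Module.Basis ι K X := Module.Basis.ofVectorSpace K X
    have hinf : Infinite ι := by
      by_contra hfin
      rw [not_infinite_iff_finite] at hfin
      have := Fintype.ofFinite ι
      exact hfd (Module.Finite.of_basis b)
    obtain e := Infinite.natEmbedding ι
    -- define g : ι → X
    let g : ι → X := fun i =>
      if hmem : ∃ n, e n = i then
        (match hmem.choose with
          | 0 => 0
          | Nat.succ m => b (e m))
      else b i
    have hg_e : ∀ n : ℕ, g (e n) =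
        (match n with | 0 => 0 | Nat.succ m => b (e m)) := by
      intro n
      have hmem : ∃ m, e m = e n := ⟨n, rfl⟩
      have hch : hmem.choose = n := e.injective hmem.choose_spec
      simp only [g, dif_pos hmem, hch]
    have hg_not : ∀ i, (¬ ∃ n, e n = i) → g i = b i := by
      intro i hi; simp only [g, dif_neg hi]
    let A := b.constr (M' := X) K g
    have hA : ∀ i, A (b i) = g i := fun i => b.constr_basis K g i
    have hsurj : Function.Surjective A := by
      have hrange : ∀ i, b i ∈ LinearMap.range A := by
        intro i
        by_cases hi : ∃ n, e n = i
        · obtain ⟨n, rfl⟩ := hi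
          refine ⟨b (e (n + 1)), ?_⟩
          rw [hA, hg_e]
        · exact ⟨b i, by rw [hA, hg_not i hi]⟩
      have htop : LinearMap.range A = ⊤ := by
        rw [← top_le_iff, ← b.span_eq, Submodule.span_le]
        rintro x ⟨i, rfl⟩
        exact hrange i
      exact LinearMap.range_eq_top.mp htop
    obtain ⟨C, hC⟩ := A.exists_rightInverse_of_surjective
      (LinearMap.range_eq_top.mpr hsurj)
    have hinj := h A ⟨C, hC⟩
    have h0 : A (b (e 0)) = 0 := by rw [hA, hg_e]
    have : b (e 0) = 0 := hinj (by simpa using h0)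
    exact b.ne_zero (e 0) this
end

section
/- A vector space X over a field K is finite-dimensional if and only if every surjective linear operator A : X → X is injective. -/
theorem stmt_12 {K X : Type*} [Field K] [AddCommGroup X] [Module K X] :
    FiniteDimensional K X ↔
      ∀ A : X →ₗ[K] X, Function.Surjective A → Function.Injective A := by
  constructor
  · intro _ A hA
    exact LinearMap.injective_iff_surjective.mpr hA
  · intro h
    by_contra hfd
    classical
    let ι := Module.Basis.ofVectorSpaceIndex K X
    let b : Module.Basis ι K X := Module.Basis.ofVectorSpace K X
    haveI : Infinite ι := by
      by_contra hinf
      haveI : Finite ι := not_infinite_iff_finite.mp hinf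
      haveI : Fintype ι := Fintype.ofFinite ι
      exact hfd (Module.Finite.of_basis b)
    let e := Infinite.natEmbedding ι
    let f : ι → ι := fun i => if hh : ∃ n, i = e (n + 1) then e hh.choose else i
    have hf0 : f (e 0) = e 0 := by
      have : ¬ ∃ n, e 0 = e (n + 1) := by
        rintro ⟨n, hn⟩
        exact Nat.succ_ne_zero n (e.injective hn).symm
      simp [f, this]
    have hfsucc : ∀ n, f (e (n + 1)) = e n := by
      intro n
      have hh : ∃ m, e (n + 1) = e (m + 1) := ⟨n, rfl⟩
      have : (e : ℕ → ι) (n + 1) = e (hh.choose + 1) := hh.choose_spec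
      have hn : hh.choose = n := by
        have := e.injective this
        omega
      simp [f, dif_pos hh, hn]
    have hfsurj : Function.Surjective f := by
      intro j
      by_cases hj : ∃ n, j = e n
      · obtain ⟨n, rfl⟩ := hj
        exact ⟨e (n + 1), hfsucc n⟩
      · refine ⟨j, ?_⟩
        have : ¬ ∃ n, j = e (n + 1) := fun ⟨n, hn⟩ => hj ⟨n + 1, hn⟩
        simp [f, this]
    let A : X →ₗ[K] X := b.constr K (fun i => b (f i))
    have hA : ∀ i, A (b i) = b (f i) := fun i => b.constr_basis K _ i
    have hAsurj : Function.Surjective A := by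
      rw [← LinearMap.range_eq_top]
      rw [← top_le_iff, ← b.span_eq]
      rw [Submodule.span_le]
      rintro x ⟨i, rfl⟩
      obtain ⟨j, rfl⟩ := hfsurj i
      exact ⟨b j, hA j⟩
    have hAinj := h A hAsurj
    have h01 : A (b (e 1)) = A (b (e 0)) := by
      rw [hA, hA, hf0, hfsucc 0]
    have := b.injective (hAinj h01)
    exact Nat.one_ne_zero (e.injective this)
end
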